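/- Let S_m = ℤ[x₁,…,x_m]/⟨x₁²,…,x_m²⟩ and let α₁, α₂, β₁, β₂ be elements of its degree-2 part with α₁ + α₂ = β₁ + β₂, α₁·α₂ = 0, and β₁·β₂ = 0. If α₁ has at least three nonzero coefficients, then α₂ = 0 and either (β₁ = 0 and β₂ = α₁) or (β₂ = 0 and β₁ = α₁). -/
import Mathlib

open MvPolynomial

/-- The defining ideal `⟨x₁²,…,x_m²⟩` of `S_m = H^*((ℂP¹)^m ; ℤ)`. -/
noncomputable def sqIdeal (m : ℕ) : Ideal (MvPolynomial (Fin m) ℤ) :=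
  Ideal.span (Set.range fun i : Fin m => (X i) ^ 2)

lemma coeff_zero_of_mem {m : ℕ} {p : MvPolynomial (Fin m) ℤ} (hp : p ∈ sqIdeal m)
    (d : Fin m →₀ ℕ) (hd : ∀ i, d i ≤ 1) : coeff d p = 0 := by
  have : p ∈ Ideal.span ((fun s => monomial s (1:ℤ)) ''
      (Set.range fun i : Fin m => Finsupp.single i 2)) := by
    convert hp using 2
    rw [sqIdeal]
    congr 1
    ext q
    simp [X_pow_eq_monomial]
  rw [mem_ideal_span_monomial_image] at this
  by_contra h
  obtain ⟨si, ⟨i, rfl⟩, hle⟩ := this d (mem_support_iff.mpr h)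
  have := hle i
  simp [Finsupp.single_apply] at this
  have := hd i
  omega

lemma coeff_lin' {m : ℕ} (a : Fin m → ℤ) (i₀ : Fin m) :
    coeff (Finsupp.single i₀ 1) (∑ i : Fin m, C (a i) * X i) = a i₀ := by
  simp_rw [C_mul_X_eq_monomial, coeff_sum, coeff_monomial]
  rw [Finset.sum_eq_single i₀]
  · simp
  · intro b _ hb
    rw [if_neg]
    intro h
    exact hb (by simpa using (Finsupp.single_left_inj one_ne_zero).mp h)
  · simp

lemma single_add_single_eq {m : ℕ} {i j i₀ j₀ : Fin m} (h : i₀ ≠ j₀) :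
    Finsupp.single i 1 + Finsupp.single j 1 = Finsupp.single i₀ 1 + Finsupp.single j₀ (1:ℕ) ↔
      (i = i₀ ∧ j = j₀) ∨ (i = j₀ ∧ j = i₀) := by
  constructor
  · intro hEq
    by_cases hii : i = i₀
    · subst hii
      exact Or.inl ⟨rfl, (Finsupp.single_left_inj one_ne_zero).mp (add_left_cancel hEq)⟩
    · have h1 := DFunLike.congr_fun hEq i₀
      simp only [Finsupp.add_apply, Finsupp.single_apply, if_neg hii, if_neg h.symm,
        if_pos rfl, zero_add, add_zero] at h1
      have hji : j = i₀ := by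
        by_contra hc
        rw [if_neg hc] at h1
        exact absurd h1 zero_ne_one
      subst hji
      rw [add_comm (Finsupp.single i 1)] at hEq
      exact Or.inr ⟨(Finsupp.single_left_inj one_ne_zero).mp (add_left_cancel hEq), rfl⟩
  · rintro (⟨rfl, rfl⟩ | ⟨rfl, rfl⟩)
    · rfl
    · exact add_comm _ _

lemma coeff_quad {m : ℕ} (a b : Fin m → ℤ) {i₀ j₀ : Fin m} (h : i₀ ≠ j₀) :
    coeff (Finsupp.single i₀ 1 + Finsupp.single j₀ 1)
      ((∑ i : Fin m, C (a i) * X i) * (∑ i : Fin m, C (b i) * X i)) =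
      a i₀ * b j₀ + a j₀ * b i₀ := by
  rw [Finset.sum_mul_sum]
  simp_rw [C_mul_X_eq_monomial, monomial_mul, coeff_sum, coeff_monomial,
    single_add_single_eq h]
  have key : ∀ i j : Fin m, (if (i = i₀ ∧ j = j₀) ∨ (i = j₀ ∧ j = i₀) then a i * b j else 0)
      = (if i = i₀ ∧ j = j₀ then a i * b j else 0)
        + (if i = j₀ ∧ j = i₀ then a i * b j else 0) := by
    intro i j
    rcases eq_or_ne i i₀ with rfl | hii <;> rcases eq_or_ne j j₀ with rfl | hjj <;>
      simp_all [h, h.symm]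
  simp_rw [key, Finset.sum_add_distrib, ite_and]
  simp

lemma single_le_one {m : ℕ} (i₀ : Fin m) (l : Fin m) : (Finsupp.single i₀ 1) l ≤ 1 := by
  simp [Finsupp.single_apply]
  split <;> omega

lemma pair_le_one {m : ℕ} {i₀ j₀ : Fin m} (h : i₀ ≠ j₀) (l : Fin m) :
    ((Finsupp.single i₀ 1 + Finsupp.single j₀ 1 : Fin m →₀ ℕ)) l ≤ 1 := by
  rcases eq_or_ne i₀ l with rfl | h1
  · simp [Finsupp.single_apply, h.symm]
  · simp only [Finsupp.add_apply, Finsupp.single_apply, if_neg h1]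
    split <;> omega

/-- the middle-coordinate vanishing lemma -/
lemma mid_zero {m : ℕ} {α β : Fin m → ℤ}
    (rel : ∀ i j : Fin m, i ≠ j → α i * β j + α j * β i = 0)
    {i j k : Fin m} (hij : i ≠ j) (hik : i ≠ k) (hjk : j ≠ k)
    (hi : α i ≠ 0) (hk : α k ≠ 0) : β j = 0 := by
  have e1 := rel i j hij
  have e2 := rel j k hjk
  have e3 := rel i k hik
  by_contra hbj
  -- β j * (α i * β k - α k * β i) = 0
  have key : β j * (α i * β k - α k * β i) = 0 := by linear_combination β k * e1 - β i * e2
  have h4 : α i * β k = α k * β i := by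
    have := mul_eq_zero.mp key
    rcases this with h | h
    · exact absurd h hbj
    · linarith
  have h5 : α k * β i = 0 := by linarith
  have hbi : β i = 0 := by
    rcases mul_eq_zero.mp h5 with h | h
    · exact absurd h hk
    · exact h
  have : α i * β j = 0 := by rw [hbi] at e1; linarith
  rcases mul_eq_zero.mp this with h | h
  · exact hi h
  · exact hbj h

/-- if the first factor has three nonzero coordinates, the second is zero -/
lemma second_zero {m : ℕ} {α β : Fin m → ℤ}
    (rel : ∀ i j : Fin m, i ≠ j → α i * β j + α j * β i = 0)
    {i j k : Fin m} (hij : i ≠ j) (hik : i ≠ k) (hjk : j ≠ k)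
    (hi : α i ≠ 0) (hj : α j ≠ 0) (hk : α k ≠ 0) : ∀ l, β l = 0 := by
  have bi : β i = 0 := mid_zero rel hij.symm hjk hik hj hk
  have bj : β j = 0 := mid_zero rel hij hik hjk hi hk
  intro l
  rcases eq_or_ne l i with rfl | hli
  · exact bi
  · have := rel i l (fun h => hli h.symm)
    rw [bi] at this
    have : α i * β l = 0 := by linarith
    rcases mul_eq_zero.mp this with h | h
    · exact absurd h hi
    · exact h

lemma supp_mono {m : ℕ} {α β : Fin m → ℤ}
    (rel : ∀ i j : Fin m, i ≠ j → α i * β j + α j * β i = 0)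
    {l i : Fin m} (hl : α l ≠ 0) (hi : β i ≠ 0) : α i ≠ 0 := by
  rcases eq_or_ne l i with rfl | hne
  · exact hl
  · have := rel l i hne
    intro hai
    rw [hai] at this
    have : α l * β i = 0 := by linarith
    rcases mul_eq_zero.mp this with h | h
    · exact hl h
    · exact hi h

/-- Let `α₁, α₂, β₁, β₂` be degree-two elements of `S_m` with `α₁ + α₂ = β₁ + β₂`,
`α₁ α₂ = 0` and `β₁ β₂ = 0`.  If `α₁` has at least three nonzero coefficients, then
`α₂ = 0` and either `β₁ = 0` and `β₂ = α₁`, or `β₂ = 0` and `β₁ = α₁`. -/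
theorem stmt18 (m : ℕ) (a₁ a₂ b₁ b₂ : Fin m → ℤ)
    (hsum : Ideal.Quotient.mk (sqIdeal m) (∑ i : Fin m, C (a₁ i) * X i) +
        Ideal.Quotient.mk (sqIdeal m) (∑ i : Fin m, C (a₂ i) * X i) =
      Ideal.Quotient.mk (sqIdeal m) (∑ i : Fin m, C (b₁ i) * X i) +
        Ideal.Quotient.mk (sqIdeal m) (∑ i : Fin m, C (b₂ i) * X i))
    (ha : Ideal.Quotient.mk (sqIdeal m) (∑ i : Fin m, C (a₁ i) * X i) *
        Ideal.Quotient.mk (sqIdeal m) (∑ i : Fin m, C (a₂ i) * X i) = 0)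
    (hb : Ideal.Quotient.mk (sqIdeal m) (∑ i : Fin m, C (b₁ i) * X i) *
        Ideal.Quotient.mk (sqIdeal m) (∑ i : Fin m, C (b₂ i) * X i) = 0)
    (hthree : 3 ≤ (Finset.univ.filter fun i => a₁ i ≠ 0).card) :
    Ideal.Quotient.mk (sqIdeal m) (∑ i : Fin m, C (a₂ i) * X i) = 0 ∧
      ((Ideal.Quotient.mk (sqIdeal m) (∑ i : Fin m, C (b₁ i) * X i) = 0 ∧
          Ideal.Quotient.mk (sqIdeal m) (∑ i : Fin m, C (b₂ i) * X i) =
            Ideal.Quotient.mk (sqIdeal m) (∑ i : Fin m, C (a₁ i) * X i)) ∨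
        (Ideal.Quotient.mk (sqIdeal m) (∑ i : Fin m, C (b₂ i) * X i) = 0 ∧
          Ideal.Quotient.mk (sqIdeal m) (∑ i : Fin m, C (b₁ i) * X i) =
            Ideal.Quotient.mk (sqIdeal m) (∑ i : Fin m, C (a₁ i) * X i))) := by
  -- extract coefficient relations
  have ha' : (∑ i : Fin m, C (a₁ i) * X i) * (∑ i : Fin m, C (a₂ i) * X i) ∈ sqIdeal m := by
    rw [← Ideal.Quotient.eq_zero_iff_mem, map_mul]; exact ha
  have hb' : (∑ i : Fin m, C (b₁ i) * X i) * (∑ i : Fin m, C (b₂ i) * X i) ∈ sqIdeal m := by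
    rw [← Ideal.Quotient.eq_zero_iff_mem, map_mul]; exact hb
  have rela : ∀ i j : Fin m, i ≠ j → a₁ i * a₂ j + a₁ j * a₂ i = 0 := by
    intro i j hij
    have := coeff_zero_of_mem ha' _ (pair_le_one hij)
    rwa [coeff_quad _ _ hij] at this
  have relb : ∀ i j : Fin m, i ≠ j → b₁ i * b₂ j + b₁ j * b₂ i = 0 := by
    intro i j hij
    have := coeff_zero_of_mem hb' _ (pair_le_one hij)
    rwa [coeff_quad _ _ hij] at this
  have hsum' : (∑ i : Fin m, C (a₁ i) * X i) + (∑ i : Fin m, C (a₂ i) * X i)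
      - ((∑ i : Fin m, C (b₁ i) * X i) + (∑ i : Fin m, C (b₂ i) * X i)) ∈ sqIdeal m := by
    rw [← Ideal.Quotient.eq_zero_iff_mem, map_sub, map_add, map_add, hsum, sub_self]
  have hcoef : ∀ i, a₁ i + a₂ i = b₁ i + b₂ i := by
    intro i
    have h0 := coeff_zero_of_mem hsum' (Finsupp.single i 1) (single_le_one i)
    rw [coeff_sub, coeff_add, coeff_add, coeff_lin', coeff_lin', coeff_lin', coeff_lin',
      sub_eq_zero] at h0
    exact h0
  -- three distinct indices where a₁ is nonzero
  obtain ⟨i, j, k, hi, hj, hk, hij, hik, hjk⟩ :=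
    Finset.two_lt_card_iff.mp (lt_of_lt_of_le (by norm_num) hthree)
  rw [Finset.mem_filter] at hi hj hk
  have hi := hi.2; have hj := hj.2; have hk := hk.2
  have ha2 : ∀ l, a₂ l = 0 := second_zero rela hij hik hjk hi hj hk
  have conc1 : Ideal.Quotient.mk (sqIdeal m) (∑ i : Fin m, C (a₂ i) * X i) = 0 := by
    have : (∑ i : Fin m, C (a₂ i) * X i) = 0 := by simp [ha2]
    rw [this, map_zero]
  have hab : ∀ i, b₁ i + b₂ i = a₁ i := by
    intro i; have := hcoef i; rw [ha2 i] at this; linarith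
  refine ⟨conc1, ?_⟩
  by_cases h2 : ∀ l, b₂ l = 0
  · refine Or.inr ⟨?_, ?_⟩
    · have : (∑ i : Fin m, C (b₂ i) * X i) = 0 := by simp [h2]
      rw [this, map_zero]
    · have e : (∑ i : Fin m, C (b₁ i) * X i) = ∑ i : Fin m, C (a₁ i) * X i :=
        Finset.sum_congr rfl fun i _ => by
          have := hab i; rw [h2 i] at this; rw [show b₁ i = a₁ i by linarith]
      rw [e]
  · by_cases h1 : ∀ l, b₁ l = 0
    · refine Or.inl ⟨?_, ?_⟩
      · have : (∑ i : Fin m, C (b₁ i) * X i) = 0 := by simp [h1]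
        rw [this, map_zero]
      · have e : (∑ i : Fin m, C (b₂ i) * X i) = ∑ i : Fin m, C (a₁ i) * X i :=
          Finset.sum_congr rfl fun i _ => by
            have := hab i; rw [h1 i] at this; rw [show b₂ i = a₁ i by linarith]
        rw [e]
    · exfalso
      push_neg at h1 h2
      obtain ⟨l, hl⟩ := h1
      have key : ∀ t : Fin m, a₁ t ≠ 0 → b₁ t ≠ 0 := by
        intro t hat
        by_cases hb2t : b₂ t = 0
        · have := hab t; rw [hb2t] at this
          intro h; rw [h] at this; simp at this; exact hat this.symm
        · exact supp_mono relb hl hb2t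
      exact absurd (second_zero relb hij hik hjk (key i hi) (key j hj) (key k hk))
        (by push_neg; exact h2)
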